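/- Let L be a finite lattice, let T be a trinket-removal set of L, and let R be the induced lattice on L \ T. Then L and R have the same decoration sites: for all a, b ∈ L \ T, the pair (a,b) is a decoration site of R if and only if (a,b) is a decoration site of L; moreover both corners of every decoration site of L lie in L \ T. -/
import Mathlib


/-- An element of a finite lattice is *doubly irreducible* if it has exactly one
upper cover and exactly one lower cover. -/
def DoublyIrreducible {α : Type*} [Lattice α] (x : α) : Prop :=
  (∃! u, x ⋖ u) ∧ (∃! l, l ⋖ x)

/-- A *decoration site* of a lattice is a pair `(a, b)` such that the set of upper
covers of `a` equals the set of lower covers of `b`, and `a` has at least two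
upper covers. -/
def DecorationSite {α : Type*} [Lattice α] (a b : α) : Prop :=
  {x | a ⋖ x} = {x | x ⋖ b} ∧ 2 ≤ {x | a ⋖ x}.ncard

/-- The doubly irreducible elements strictly between `a` and `b`. -/
def siteTrinkets {α : Type*} [Lattice α] (a b : α) : Set α :=
  {x | DoublyIrreducible x ∧ a < x ∧ x < b}

/-- A *trinket-removal set* of a lattice: for every decoration site `(a, b)` it
contains exactly `min d (k - 2)` doubly irreducible elements strictly between
`a` and `b` (where `d` is the number of doubly irreducible elements strictly
between `a` and `b`, and `k` is the number of upper covers of `a`), and it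
contains no other elements. -/
def TrinketRemovalSet {α : Type*} [Lattice α] (T : Set α) : Prop :=
  (∀ a b : α, DecorationSite a b →
      (T ∩ siteTrinkets a b).ncard =
        min (siteTrinkets a b).ncard ({x | a ⋖ x}.ncard - 2)) ∧
  ∀ t ∈ T, ∃ a b : α, DecorationSite a b ∧ t ∈ siteTrinkets a b

/-- A finite lattice is a *rack* if `min d (k - 2) = 0` for every decoration site. -/
def IsRack (α : Type*) [Lattice α] : Prop :=
  ∀ a b : α, DecorationSite a b →
    min (siteTrinkets a b).ncard ({x | a ⋖ x}.ncard - 2) = 0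

/-- A *knot* of a finite lattice is an element distinct from top and bottom that
is comparable with every element. -/
def IsKnot {α : Type*} [Lattice α] (x : α) : Prop :=
  (∃ y, x < y) ∧ (∃ y, y < x) ∧ ∀ y, x ≤ y ∨ y ≤ x

/-- Birkhoff's semimodularity condition: whenever distinct `x` and `y` both
cover a common element `a`, the join `x ⊔ y` covers both `x` and `y`. -/
def Semimodular (α : Type*) [Lattice α] : Prop :=
  ∀ a x y : α, x ≠ y → a ⋖ x → a ⋖ y → x ⋖ x ⊔ y ∧ y ⋖ x ⊔ y

/-- The modular law: for all `x ≤ z`, `x ⊔ (y ⊓ z) = (x ⊔ y) ⊓ z`. -/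
def ModularLaw (α : Type*) [Lattice α] : Prop :=
  ∀ x y z : α, x ≤ z → x ⊔ (y ⊓ z) = (x ⊔ y) ⊓ z

section Aux

variable {α : Type*} [Lattice α] [Finite α]

lemma aux_site_cov_iff {a b : α} (h : DecorationSite a b) (c : α) : a ⋖ c ↔ c ⋖ b :=
  Set.ext_iff.mp h.1 c

lemma aux_between {a b x : α} (h : DecorationSite a b) (hax : a < x) (hxb : x < b) :
    a ⋖ x ∧ x ⋖ b := by
  obtain ⟨c, hc, hcx⟩ := exists_covBy_le_of_lt hax
  have hcb : c ⋖ b := (aux_site_cov_iff h c).mp hc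
  have hxc : x = c := by
    rcases hcx.lt_or_eq with h' | h'
    · exact absurd hxb (hcb.2 h')
    · exact h'.symm
  subst hxc
  exact ⟨hc, hcb⟩

lemma aux_two_covers {a : α} (h : 2 ≤ {x | a ⋖ x}.ncard) :
    ∃ c₀ c₁ : α, a ⋖ c₀ ∧ a ⋖ c₁ ∧ c₀ ≠ c₁ := by
  obtain ⟨c₀, hc₀, c₁, hc₁, hne⟩ := (Set.one_lt_ncard (Set.toFinite _)).mp h
  exact ⟨c₀, c₁, hc₀, hc₁, hne⟩

variable {T : Set α} (hT : TrinketRemovalSet T)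

include hT

lemma aux_trinket {t : α} (ht : t ∈ T) :
    ∃ a b : α, DecorationSite a b ∧ a ⋖ t ∧ t ⋖ b ∧
      (∀ x, x ⋖ t → x = a) ∧ (∀ x, t ⋖ x → x = b) := by
  obtain ⟨a, b, hsite, hdi, hat, htb⟩ := hT.2 t ht
  obtain ⟨hat', htb'⟩ := aux_between hsite hat htb
  exact ⟨a, b, hsite, hat', htb',
    fun x hx => hdi.2.unique hx hat',
    fun x hx => hdi.1.unique hx htb'⟩

lemma aux_corners {a b : α} (h : DecorationSite a b) : a ∉ T ∧ b ∉ T := by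
  obtain ⟨c₀, c₁, hc₀, hc₁, hne⟩ := aux_two_covers h.2
  constructor
  · intro haT
    obtain ⟨_, _, _, hdi, _⟩ := hT.2 a haT
    exact hne (hdi.1.unique hc₀ hc₁)
  · intro hbT
    obtain ⟨_, _, _, hdi, _⟩ := hT.2 b hbT
    exact hne (hdi.2.unique ((aux_site_cov_iff h c₀).mp hc₀) ((aux_site_cov_iff h c₁).mp hc₁))

lemma aux_cov_mem_trinkets {a b c : α} (h : DecorationSite a b) (hcT : c ∈ T) (hc : a ⋖ c) :
    c ∈ siteTrinkets a b := by
  obtain ⟨a', b', hsite', hdi, hlt1, hlt2⟩ := hT.2 c hcT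
  exact ⟨hdi, hc.lt, ((aux_site_cov_iff h c).mp hc).lt⟩

lemma aux_survivors {a b : α} (h : DecorationSite a b) :
    ∃ c₀ c₁ : α, c₀ ≠ c₁ ∧ c₀ ∉ T ∧ c₁ ∉ T ∧ a ⋖ c₀ ∧ a ⋖ c₁ := by
  have hMC : T ∩ siteTrinkets a b ⊆ {x : α | a ⋖ x} := by
    rintro x ⟨hxT, hdi, hax, hxb⟩
    exact (aux_between h hax hxb).1
  have hTC : T ∩ {x : α | a ⋖ x} ⊆ T ∩ siteTrinkets a b := by
    rintro x ⟨hxT, hxC⟩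
    exact ⟨hxT, aux_cov_mem_trinkets hT h hxT hxC⟩
  have hcard : ({x : α | a ⋖ x} \ (T ∩ siteTrinkets a b)).ncard
      = {x : α | a ⋖ x}.ncard - (T ∩ siteTrinkets a b).ncard :=
    Set.ncard_diff hMC (Set.toFinite _)
  have hMcard : (T ∩ siteTrinkets a b).ncard ≤ {x : α | a ⋖ x}.ncard - 2 := by
    rw [hT.1 a b h]
    exact min_le_right _ _
  have h2 : 2 ≤ ({x : α | a ⋖ x} \ (T ∩ siteTrinkets a b)).ncard := by
    have h3 := h.2
    omega
  obtain ⟨c₀, hc₀, c₁, hc₁, hne⟩ := (Set.one_lt_ncard (Set.toFinite _)).mp h2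
  refine ⟨c₀, c₁, hne, fun hc => hc₀.2 (hTC ⟨hc, hc₀.1⟩), fun hc => hc₁.2 (hTC ⟨hc, hc₁.1⟩),
    hc₀.1, hc₁.1⟩

omit hT in
lemma aux_sup_eq {a c₀ c₁ b : α} (h0 : a ⋖ c₀) (h1 : a ⋖ c₁) (hne : c₀ ≠ c₁)
    (hb : c₀ ⋖ b) (hb1 : c₁ ≤ b) : c₀ ⊔ c₁ = b := by
  have hlt : c₀ < c₀ ⊔ c₁ := by
    rcases le_sup_left.lt_or_eq (a := c₀) (b := c₀ ⊔ c₁) with h' | h'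
    · exact h'
    · exfalso
      have hc1le : c₁ ≤ c₀ := le_sup_right.trans h'.ge
      rcases hc1le.lt_or_eq with h'' | h''
      · exact h0.2 h1.lt h''
      · exact hne h''.symm
  have hle : c₀ ⊔ c₁ ≤ b := sup_le hb.le hb1
  rcases hle.lt_or_eq with h' | h'
  · exact absurd h' (hb.2 hlt)
  · exact h'

omit hT in
lemma aux_inf_eq {a c₀ c₁ b : α} (h0 : c₀ ⋖ b) (h1 : c₁ ⋖ b) (hne : c₀ ≠ c₁)
    (ha : a ⋖ c₀) (ha1 : a ≤ c₁) : c₀ ⊓ c₁ = a := by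
  have hlt : c₀ ⊓ c₁ < c₀ := by
    rcases inf_le_left.lt_or_eq (a := c₀ ⊓ c₁) (b := c₀) with h' | h'
    · exact h'
    · exfalso
      have hc0le : c₀ ≤ c₁ := h'.ge.trans inf_le_right
      rcases hc0le.lt_or_eq with h'' | h''
      · exact h0.2 h'' h1.lt
      · exact hne h''
  have hle : a ≤ c₀ ⊓ c₁ := le_inf ha.le ha1
  rcases hle.lt_or_eq with h' | h'
  · exact absurd hlt (ha.2 h')
  · exact h'.symm

end Aux

section Sub

variable {α : Type*} [Lattice α] [Finite α] {T : Set α}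
  (hT : TrinketRemovalSet T) {S : Sublattice α} (hS : (S : Set α) = Tᶜ)

lemma sub_lt_iff {x y : ↥S} : (x : α) < (y : α) ↔ x < y := Iff.rfl

lemma sub_mem_iff (hS : (S : Set α) = Tᶜ) {x : α} : x ∈ S ↔ x ∉ T := by
  rw [← SetLike.mem_coe, hS]; rfl

lemma covL_covS {x y : ↥S} (h : (x : α) ⋖ (y : α)) : x ⋖ y :=
  ⟨sub_lt_iff.mp h.lt, fun _ hz hz' => h.2 (sub_lt_iff.mpr hz) (sub_lt_iff.mpr hz')⟩

include hT hS in
lemma covS_covL {x y : ↥S} (h : x ⋖ y) : (x : α) ⋖ (y : α) := by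
  refine ⟨sub_lt_iff.mpr h.lt, fun z hxz hzy => ?_⟩
  have hzT : z ∈ T := by
    by_contra hz
    have p1 : x < (⟨z, (sub_mem_iff hS).mpr hz⟩ : ↥S) := sub_lt_iff.mp hxz
    have p2 : (⟨z, (sub_mem_iff hS).mpr hz⟩ : ↥S) < y := sub_lt_iff.mp hzy
    exact h.2 p1 p2
  obtain ⟨a, b, hsite, haz, hzb, hua, hub⟩ := aux_trinket hT hzT
  have hxa : (x : α) ≤ a := by
    obtain ⟨c, hxc, hcz⟩ := exists_le_covBy_of_lt hxz
    exact (hua c hcz) ▸ hxc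
  have hby : b ≤ (y : α) := by
    obtain ⟨c, hzc, hcy⟩ := exists_covBy_le_of_lt hzy
    exact (hub c hzc) ▸ hcy
  have haS : a ∈ S := (sub_mem_iff hS).mpr (aux_corners hT hsite).1
  have hbS : b ∈ S := (sub_mem_iff hS).mpr (aux_corners hT hsite).2
  rcases hxa.lt_or_eq with hxa' | hxa'
  · have p1 : x < (⟨a, haS⟩ : ↥S) := sub_lt_iff.mp hxa'
    have p2 : (⟨a, haS⟩ : ↥S) < y :=
      sub_lt_iff.mp (lt_of_lt_of_le (haz.lt.trans hzb.lt) hby)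
    exact h.2 p1 p2
  rcases hby.lt_or_eq with hby' | hby'
  · have p1 : x < (⟨b, hbS⟩ : ↥S) :=
      sub_lt_iff.mp (lt_of_le_of_lt hxa (haz.lt.trans hzb.lt))
    have p2 : (⟨b, hbS⟩ : ↥S) < y := sub_lt_iff.mp hby'
    exact h.2 p1 p2
  obtain ⟨c₀, c₁, hne, hc₀T, hc₁T, hac₀, hac₁⟩ := aux_survivors hT hsite
  have hc₀b : c₀ ⋖ b := (aux_site_cov_iff hsite c₀).mp hac₀
  have p1 : x < (⟨c₀, (sub_mem_iff hS).mpr hc₀T⟩ : ↥S) := sub_lt_iff.mp (hxa' ▸ hac₀.lt)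
  have p2 : (⟨c₀, (sub_mem_iff hS).mpr hc₀T⟩ : ↥S) < y := sub_lt_iff.mp (hby' ▸ hc₀b.lt)
  exact h.2 p1 p2

end Sub

set_option linter.unusedSectionVars false in
/-- Removing a trinket-removal set does not change the decoration sites: a pair
of surviving elements is a decoration site of the induced lattice `R` iff it is
one of `L`, and both corners of every decoration site of `L` survive. -/
theorem stmt_5 {α : Type*} [Lattice α] [Finite α] [Nonempty α] (T : Set α)
    (hT : TrinketRemovalSet T) (S : Sublattice α) (hS : (S : Set α) = Tᶜ) :
    (∀ a b : ↥S, DecorationSite a b ↔ DecorationSite (a : α) (b : α)) ∧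
    (∀ a b : α, DecorationSite a b → a ∈ S ∧ b ∈ S) := by
  constructor
  · intro a b
    constructor
    · -- site in S → site in L
      intro hsite
      obtain ⟨c₀, c₁, hac₀, hac₁, hne⟩ := aux_two_covers hsite.2
      have hc₀b : c₀ ⋖ b := (aux_site_cov_iff hsite c₀).mp hac₀
      have hc₁b : c₁ ⋖ b := (aux_site_cov_iff hsite c₁).mp hac₁
      have Hac₀ : (a : α) ⋖ (c₀ : α) := covS_covL hT hS hac₀
      have Hac₁ : (a : α) ⋖ (c₁ : α) := covS_covL hT hS hac₁
      have Hc₀b : (c₀ : α) ⋖ (b : α) := covS_covL hT hS hc₀b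
      have Hc₁b : (c₁ : α) ⋖ (b : α) := covS_covL hT hS hc₁b
      have Hne : (c₀ : α) ≠ (c₁ : α) := fun h => hne (Subtype.ext h)
      have hset : {x : α | (a : α) ⋖ x} = {x : α | x ⋖ (b : α)} := by
        ext x
        simp only [Set.mem_setOf_eq]
        constructor
        · intro hx
          by_cases hxT : x ∈ T
          · obtain ⟨a', b', hsite', ha'x, hxb', hua, hub⟩ := aux_trinket hT hxT
            have ha' : a' = (a : α) := (hua _ hx).symm
            subst ha'
            have h0 : (c₀ : α) ⋖ b' := (aux_site_cov_iff hsite' _).mp Hac₀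
            have h1 : (c₁ : α) ⋖ b' := (aux_site_cov_iff hsite' _).mp Hac₁
            have e1 : (c₀ : α) ⊔ (c₁ : α) = b' := aux_sup_eq Hac₀ Hac₁ Hne h0 h1.le
            have e2 : (c₀ : α) ⊔ (c₁ : α) = (b : α) := aux_sup_eq Hac₀ Hac₁ Hne Hc₀b Hc₁b.le
            exact (e1.symm.trans e2) ▸ hxb'
          · have hxS : x ∈ S := (sub_mem_iff hS).mpr hxT
            have : a ⋖ (⟨x, hxS⟩ : ↥S) := covL_covS hx
            exact covS_covL hT hS ((aux_site_cov_iff hsite _).mp this)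
        · intro hx
          by_cases hxT : x ∈ T
          · obtain ⟨a', b', hsite', ha'x, hxb', hua, hub⟩ := aux_trinket hT hxT
            have hb' : b' = (b : α) := (hub _ hx).symm
            subst hb'
            have h0 : a' ⋖ (c₀ : α) := (aux_site_cov_iff hsite' _).mpr Hc₀b
            have h1 : a' ⋖ (c₁ : α) := (aux_site_cov_iff hsite' _).mpr Hc₁b
            have e1 : (c₀ : α) ⊓ (c₁ : α) = a' := aux_inf_eq Hc₀b Hc₁b Hne h0 h1.le
            have e2 : (c₀ : α) ⊓ (c₁ : α) = (a : α) := aux_inf_eq Hc₀b Hc₁b Hne Hac₀ Hac₁.le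
            exact (e1.symm.trans e2) ▸ ha'x
          · have hxS : x ∈ S := (sub_mem_iff hS).mpr hxT
            have : (⟨x, hxS⟩ : ↥S) ⋖ b := covL_covS hx
            exact covS_covL hT hS ((aux_site_cov_iff hsite _).mpr this)
      refine ⟨hset, ?_⟩
      exact (Set.one_lt_ncard (Set.toFinite _)).mpr ⟨_, Hac₀, _, Hac₁, Hne⟩
    · -- site in L → site in S
      intro hsite
      obtain ⟨c₀, c₁, hne, hc₀T, hc₁T, hac₀, hac₁⟩ := aux_survivors hT hsite
      have hc₀S : c₀ ∈ S := (sub_mem_iff hS).mpr hc₀T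
      have hc₁S : c₁ ∈ S := (sub_mem_iff hS).mpr hc₁T
      have hset : {x : ↥S | a ⋖ x} = {x : ↥S | x ⋖ b} := by
        ext x
        simp only [Set.mem_setOf_eq]
        constructor
        · intro hx
          exact covL_covS ((aux_site_cov_iff hsite _).mp (covS_covL hT hS hx))
        · intro hx
          exact covL_covS ((aux_site_cov_iff hsite _).mpr (covS_covL hT hS hx))
      refine ⟨hset, ?_⟩
      refine (Set.one_lt_ncard (Set.toFinite _)).mpr
        ⟨⟨c₀, hc₀S⟩, covL_covS hac₀, ⟨c₁, hc₁S⟩, covL_covS hac₁, ?_⟩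
      exact fun h => hne (congrArg Subtype.val h)
  · intro a b hsite
    obtain ⟨ha, hb⟩ := aux_corners hT hsite
    exact ⟨(sub_mem_iff hS).mpr ha, (sub_mem_iff hS).mpr hb⟩
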